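/- Let S ⊆ ℝ^m be a finite set and F = conv(S) its convex hull. If a point f⁰ ∈ F belongs to the Pareto boundary of F, then there exist real coefficients d_1,…,d_m, all strictly positive, such that the linear function ℓ(f) = d_1 f_1 + … + d_m f_m attains its maximum over F at f⁰. -/

import Mathlib

/-- The de Borda estimate of candidate `a` under scores `s` for profile `u`,
where `u i a : Fin p` is the 0-indexed rank of candidate `a` in the preference
of voter `i` (`0` = top place).  A candidate with 0-indexed rank `r` obtains
`s (p-1-r)` points, i.e. `B_s(a) = ∑_i s_{p - rank_i(a)}` with 1-indexed ranks. -/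
def bordaEstimate {n p : ℕ} (u : Fin n → Equiv.Perm (Fin p)) (s : Fin p → ℝ)
    (a : Fin p) : ℝ :=
  ∑ i : Fin n, s (Fin.rev (u i a))

/-- The score vector of candidate `a` : its `k`-th component (`k : Fin (p-1)`,
0-indexed) is the number of voters who place `a` within the top `k+1` places. -/
def scoreVec {n p : ℕ} (u : Fin n → Equiv.Perm (Fin p)) (a : Fin p) :
    Fin (p - 1) → ℝ :=
  fun k => ((Finset.univ : Finset (Fin n)).filter fun i => ((u i a : Fin p) : ℕ) ≤ (k : ℕ)).card

/-- `f'` belongs to the Pareto boundary of `F`. -/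
def ParetoOpt {m : ℕ} (F : Set (Fin m → ℝ)) (f' : Fin m → ℝ) : Prop :=
  f' ∈ F ∧ ¬ ∃ f ∈ F, (∀ j, f' j ≤ f j) ∧ ∃ j0, f' j0 < f j0

/-- `f''` belongs to the weak Pareto boundary of `F`. -/
def WeakParetoOpt {m : ℕ} (F : Set (Fin m → ℝ)) (f'' : Fin m → ℝ) : Prop :=
  f'' ∈ F ∧ ¬ ∃ f ∈ F, ∀ j, f'' j < f j

open Finset

private def dotp {m : ℕ} (x y : Fin m → ℝ) : ℝ := ∑ j, x j * y j

private lemma dotp_smul_left {m : ℕ} (c : ℝ) (x y : Fin m → ℝ) :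
    dotp (c • x) y = c * dotp x y := by
  simp [dotp, Finset.mul_sum, mul_assoc]

private lemma dotp_sub_left {m : ℕ} (x x' y : Fin m → ℝ) :
    dotp (x - x') y = dotp x y - dotp x' y := by
  simp [dotp, sub_mul, Finset.sum_sub_distrib]

private lemma dotp_smul_right {m : ℕ} (c : ℝ) (x y : Fin m → ℝ) :
    dotp x (c • y) = c * dotp x y := by
  simp [dotp, Finset.mul_sum]; ring_nf
  exact Finset.sum_congr rfl fun j _ => by ring

private lemma dotp_sub_right {m : ℕ} (x y y' : Fin m → ℝ) :
    dotp x (y - y') = dotp x y - dotp x y' := by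
  simp [dotp, mul_sub, Finset.sum_sub_distrib]

private lemma farkas {m : ℕ} {ι : Type} (T : Finset ι) :
    ∀ (g : ι → (Fin m → ℝ)) (b : Fin m → ℝ),
    (¬ ∃ lam : ι → ℝ, (∀ i ∈ T, 0 ≤ lam i) ∧ b = ∑ i ∈ T, lam i • g i) →
    ∃ y : Fin m → ℝ, (∀ i ∈ T, dotp y (g i) ≤ 0) ∧ 0 < dotp y b := by
  classical
  induction T using Finset.cons_induction with
  | empty =>
    intro g b hb
    have hbne : b ≠ 0 := by
      intro h; exact hb ⟨fun _ => 0, fun i hi => le_refl _, by simp [h]⟩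
    refine ⟨b, by simp, ?_⟩
    obtain ⟨j, hj⟩ : ∃ j, b j ≠ 0 := by
      by_contra hc; push_neg at hc; exact hbne (funext hc)
    exact Finset.sum_pos' (fun j _ => mul_self_nonneg _) ⟨j, Finset.mem_univ j, mul_self_pos.mpr hj⟩
  | cons a T' ha IH =>
    intro g b hb
    have hb' : ¬ ∃ lam : ι → ℝ, (∀ i ∈ T', 0 ≤ lam i) ∧ b = ∑ i ∈ T', lam i • g i := by
      rintro ⟨lam, hnn, hsum⟩
      refine hb ⟨Function.update lam a 0, ?_, ?_⟩
      · intro i hi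
        rcases Finset.mem_cons.1 hi with rfl | hi'
        · simp
        · rw [Function.update_of_ne (by rintro rfl; exact ha hi')]; exact hnn i hi'
      · rw [Finset.sum_cons]
        have he : ∑ i ∈ T', Function.update lam a 0 i • g i = ∑ i ∈ T', lam i • g i :=
          Finset.sum_congr rfl fun i hi => by
            rw [Function.update_of_ne (by rintro rfl; exact ha hi)]
        simp [he, hsum]
    obtain ⟨y, hy1, hy2⟩ := IH g b hb'
    by_cases hya : dotp y (g a) ≤ 0
    · refine ⟨y, ?_, hy2⟩
      intro i hi
      rcases Finset.mem_cons.1 hi with rfl | hi'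
      · exact hya
      · exact hy1 i hi'
    push_neg at hya
    set c := dotp y (g a) with hc
    set G : ι → (Fin m → ℝ) := fun i => c • g i - (dotp y (g i)) • g a with hG
    set B : Fin m → ℝ := c • b - (dotp y b) • g a with hB
    have hB' : ¬ ∃ lam : ι → ℝ, (∀ i ∈ T', 0 ≤ lam i) ∧ B = ∑ i ∈ T', lam i • G i := by
      rintro ⟨lam, hnn, hsum⟩
      set t := ∑ i ∈ T', lam i * dotp y (g i) with ht
      have hts : ∑ i ∈ T', lam i • G i
          = c • (∑ i ∈ T', lam i • g i) - t • g a := by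
        rw [ht, Finset.smul_sum, Finset.sum_smul, ← Finset.sum_sub_distrib]
        refine Finset.sum_congr rfl fun i hi => ?_
        rw [hG]
        module
      have key : c • b = c • (∑ i ∈ T', lam i • g i) + (dotp y b - t) • g a := by
        rw [hts, hB] at hsum
        rw [sub_smul]
        rw [sub_eq_sub_iff_add_eq_add] at hsum
        rw [← sub_eq_iff_eq_add'] at hsum
        rw [← hsum]
        module
      have hcne : c ≠ 0 := ne_of_gt hya
      have μdef : b = (∑ i ∈ T', lam i • g i) + ((dotp y b - t)/c) • g a := by
        have h2 := congrArg (fun z => c⁻¹ • z) key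
        simp only [smul_add, smul_smul, inv_mul_cancel₀ hcne, one_smul] at h2
        rw [div_eq_inv_mul]
        exact h2
      have htle : t ≤ 0 := Finset.sum_nonpos fun i hi =>
        mul_nonpos_of_nonneg_of_nonpos (hnn i hi) (hy1 i hi)
      have hμ : 0 ≤ (dotp y b - t)/c := by
        apply div_nonneg _ (le_of_lt hya); linarith
      refine hb ⟨Function.update lam a ((dotp y b - t)/c), ?_, ?_⟩
      · intro i hi
        rcases Finset.mem_cons.1 hi with rfl | hi'
        · simpa using hμ
        · rw [Function.update_of_ne (by rintro rfl; exact ha hi')]; exact hnn i hi'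
      · rw [Finset.sum_cons]
        have he : ∑ i ∈ T', Function.update lam a ((dotp y b - t)/c) i • g i
            = ∑ i ∈ T', lam i • g i :=
          Finset.sum_congr rfl fun i hi => by
            rw [Function.update_of_ne (by rintro rfl; exact ha hi)]
        rw [he, Function.update_self]
        exact μdef.trans (add_comm _ _)
    obtain ⟨z, hz1, hz2⟩ := IH G B hB'
    refine ⟨c • z - (dotp z (g a)) • y, ?_, ?_⟩
    · intro i hi
      rw [dotp_sub_left, dotp_smul_left, dotp_smul_left]
      rcases Finset.mem_cons.1 hi with rfl | hi'
      · rw [← hc]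
        have : c * dotp z (g i) - dotp z (g i) * c = 0 := by ring
        linarith
      · have hzi := hz1 i hi'
        rw [hG] at hzi
        simp only [dotp_sub_right, dotp_smul_right] at hzi
        have e : dotp z (g a) * dotp y (g i) = dotp y (g i) * dotp z (g a) := mul_comm _ _
        linarith
    · rw [dotp_sub_left, dotp_smul_left, dotp_smul_left]
      rw [hB, dotp_sub_right, dotp_smul_right, dotp_smul_right] at hz2
      have e : dotp z (g a) * dotp y b = dotp y b * dotp z (g a) := mul_comm _ _
      linarith

private theorem paretoBoundary_exists_pos_linear_max' {m : ℕ} (S : Finset (Fin m → ℝ))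
    (f0 : Fin m → ℝ)
    (h : (f0 ∈ convexHull ℝ (S : Set (Fin m → ℝ))) ∧
      ¬ ∃ f ∈ convexHull ℝ (S : Set (Fin m → ℝ)), (∀ j, f0 j ≤ f j) ∧ ∃ j0, f0 j0 < f j0) :
    ∃ d : Fin m → ℝ, (∀ j, 0 < d j) ∧
      ∀ f ∈ convexHull ℝ (S : Set (Fin m → ℝ)),
        ∑ j, d j * f j ≤ ∑ j, d j * f0 j := by
  classical
  obtain ⟨hf0, hpar⟩ := h
  set g : ((Fin m → ℝ) ⊕ Fin m) → (Fin m → ℝ) :=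
    Sum.elim (fun s => s - f0) (fun i => -(Pi.single i (1:ℝ))) with hg
  set T : Finset ((Fin m → ℝ) ⊕ Fin m) := S.disjSum Finset.univ with hT
  have hnot : ∀ j : Fin m, ¬ ∃ lam : ((Fin m → ℝ) ⊕ Fin m) → ℝ,
      (∀ i ∈ T, 0 ≤ lam i) ∧ Pi.single j 1 = ∑ i ∈ T, lam i • g i := by
    intro j
    rintro ⟨lam, hnn, hsum⟩
    rw [hT, Finset.sum_disjSum] at hsum
    set X : Fin m → ℝ := ∑ s ∈ S, lam (Sum.inl s) • (s - f0) with hX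
    set μ : ℝ := ∑ s ∈ S, lam (Sum.inl s) with hμ
    have hnninl : ∀ s ∈ S, 0 ≤ lam (Sum.inl s) := fun s hs =>
      hnn _ (Finset.inl_mem_disjSum.2 hs)
    have hnninr : ∀ i : Fin m, 0 ≤ lam (Sum.inr i) := fun i =>
      hnn _ (Finset.inr_mem_disjSum.2 (Finset.mem_univ i))
    have hx : ∀ j', X j' = (Pi.single j (1:ℝ) : Fin m → ℝ) j' + lam (Sum.inr j') := by
      intro j'
      have hc := congrFun hsum j'
      simp only [hg, Sum.elim_inl, Sum.elim_inr, Finset.sum_apply, Pi.add_apply,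
        Pi.smul_apply, smul_eq_mul, Pi.neg_apply, Pi.single_apply, mul_ite,
        mul_one, mul_zero, mul_neg, Finset.sum_ite_eq, Finset.mem_univ,
        if_true, Finset.sum_neg_distrib] at hc
      have hX' : X j' = ∑ s ∈ S, lam (Sum.inl s) * (s j' - f0 j') := by
        simp [hX, Finset.sum_apply]
      rw [hX']
      by_cases hjj : j' = j <;> simp [hjj, Pi.single_apply] at hc ⊢ <;> linarith
    have hXnn : ∀ j', 0 ≤ X j' := by
      intro j'
      rw [hx j']
      have h1 := hnninr j'
      have h2 := hnninr j
      by_cases hjj : j' = j <;> simp [hjj, Pi.single_apply] <;> linarith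
    have hXj : 1 ≤ X j := by
      have := hx j
      have h2 := hnninr j
      simp [Pi.single_apply] at this
      linarith
    have hμnn : 0 ≤ μ := Finset.sum_nonneg hnninl
    rcases eq_or_lt_of_le hμnn with hμ0 | hμpos
    · -- all inl coefficients vanish, contradiction with X j ≥ 1
      have hz : ∀ s ∈ S, lam (Sum.inl s) = 0 :=
        (Finset.sum_eq_zero_iff_of_nonneg hnninl).1 hμ0.symm
      have : X j = 0 := by
        have hX' : X j = ∑ s ∈ S, lam (Sum.inl s) * (s j - f0 j) := by
          simp [hX, Finset.sum_apply]
        rw [hX']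
        exact Finset.sum_eq_zero fun s hs => by rw [hz s hs, zero_mul]
      linarith
    · set w : (Fin m → ℝ) → ℝ := fun s => lam (Sum.inl s) / μ with hw
      have hw1 : ∑ s ∈ S, w s = 1 := by
        rw [hw]; rw [← Finset.sum_div]; exact div_self (ne_of_gt hμpos)
      have hwnn : ∀ s ∈ S, 0 ≤ w s := fun s hs => div_nonneg (hnninl s hs) hμnn
      set f : Fin m → ℝ := ∑ s ∈ S, w s • s with hf
      have hfhull : f ∈ convexHull ℝ (S : Set (Fin m → ℝ)) := by
        have hmem := S.centerMass_mem_convexHull hwnn (hw1 ▸ one_pos)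
          (fun s hs => Finset.mem_coe.2 hs) (z := id)
        rw [Finset.centerMass_eq_of_sum_1 _ id hw1] at hmem
        simpa [hf] using hmem
      have hfj : ∀ j', f j' = f0 j' + μ⁻¹ * X j' := by
        intro j'
        have hX' : X j' = ∑ s ∈ S, lam (Sum.inl s) * (s j' - f0 j') := by
          simp [hX, Finset.sum_apply]
        have hf' : f j' = ∑ s ∈ S, w s * s j' := by simp [hf, Finset.sum_apply]
        rw [hf', hX', Finset.mul_sum]
        have : ∀ s ∈ S, μ⁻¹ * (lam (Sum.inl s) * (s j' - f0 j')) =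
            w s * s j' - w s * f0 j' := by
          intro s hs
          rw [hw]; field_simp
        rw [Finset.sum_congr rfl this, Finset.sum_sub_distrib, ← Finset.sum_mul, hw1]
        ring
      refine hpar ⟨f, hfhull, fun j' => ?_, j, ?_⟩
      · rw [hfj j']
        have h1 := hXnn j'
        have h2 : 0 < μ⁻¹ := inv_pos.2 hμpos
        nlinarith
      · rw [hfj j]
        have h2 : 0 < μ⁻¹ := inv_pos.2 hμpos
        nlinarith
  have hfar : ∀ j : Fin m, ∃ y : Fin m → ℝ,
      (∀ i ∈ T, dotp y (g i) ≤ 0) ∧ 0 < dotp y (Pi.single j 1) :=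
    fun j => farkas T g _ (hnot j)
  choose y hy1 hy2 using hfar
  have hdot_single : ∀ (x : Fin m → ℝ) (j : Fin m), dotp x (Pi.single j 1) = x j := by
    intro x j
    simp [dotp, Pi.single_apply, mul_ite]
  have hynn : ∀ j i, 0 ≤ y j i := by
    intro j i
    have := hy1 j _ (Finset.inr_mem_disjSum.2 (Finset.mem_univ i))
    simp only [hg, Sum.elim_inr] at this
    have h2 : dotp (y j) (-(Pi.single i 1)) = -(y j i) := by
      rw [show -(Pi.single i (1:ℝ)) = (0:Fin m → ℝ) - Pi.single i 1 by simp,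
        dotp_sub_right, hdot_single]
      simp [dotp]
    linarith [h2 ▸ this]
  have hypos : ∀ j, 0 < y j j := fun j => by
    have := hy2 j; rwa [hdot_single] at this
  refine ⟨fun i => ∑ j, y j i, fun i =>
    Finset.sum_pos' (fun j _ => hynn j i) ⟨i, Finset.mem_univ i, hypos i⟩, ?_⟩
  intro f hf
  have hS : ∀ s ∈ S, ∑ j, (∑ k, y k j) * s j ≤ ∑ j, (∑ k, y k j) * f0 j := by
    intro s hs
    have hk : ∀ k : Fin m, dotp (y k) (s - f0) ≤ 0 := fun k =>
      hy1 k _ (Finset.inl_mem_disjSum.2 hs)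
    have hsum : ∑ k, dotp (y k) (s - f0) ≤ 0 :=
      Finset.sum_nonpos fun k _ => hk k
    have hswap : ∑ k, dotp (y k) (s - f0) =
        ∑ j, (∑ k, y k j) * s j - ∑ j, (∑ k, y k j) * f0 j := by
      simp only [dotp, Pi.sub_apply, mul_sub, Finset.sum_sub_distrib, Finset.sum_mul]
      congr 1 <;> exact Finset.sum_comm
    linarith [hswap ▸ hsum]
  have hconv : Convex ℝ {f : Fin m → ℝ | ∑ j, (∑ k, y k j) * f j ≤ ∑ j, (∑ k, y k j) * f0 j} := by
    apply convex_halfSpace_le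
    constructor
    · intro a b; simp [mul_add, Finset.sum_add_distrib]
    · intro c a; simp [Finset.mul_sum, mul_left_comm]
  exact convexHull_min (fun s hs => hS s (Finset.mem_coe.1 hs)) hconv hf

/-- If a point `f0` of the convex hull of a finite set `S ⊆ ℝ^m` belongs to the
Pareto boundary of that convex hull, then some linear function with strictly
positive coefficients attains its maximum over the convex hull at `f0`. -/
theorem paretoBoundary_exists_pos_linear_max {m : ℕ} (S : Finset (Fin m → ℝ))
    (f0 : Fin m → ℝ)
    (h : ParetoOpt (convexHull ℝ (S : Set (Fin m → ℝ))) f0) :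
    ∃ d : Fin m → ℝ, (∀ j, 0 < d j) ∧
      ∀ f ∈ convexHull ℝ (S : Set (Fin m → ℝ)),
        ∑ j, d j * f j ≤ ∑ j, d j * f0 j := by
  exact paretoBoundary_exists_pos_linear_max' S f0 ⟨h.1, h.2⟩
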